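/- arXiv:2405.02521 — 2 statements merged into one kernel-verified Lean document; each statement's English description precedes it below -/
import Mathlib

section
/- For all β, a, t ∈ ℝ, with t₀ := log μ_h(a) = −log √(1+a²), one has Φ(γ_{β,a}(t + t₀)) = γ^E_{β, arctan a}(μ_h(a)·tanh t) = e^{i(β+arctan a+π)}·μ_h(a)·(tanh t + i·a). -/
noncomputable section

/-- `x̂(t) = tanh(t/2)`. -/
def xhat (t : ℝ) : ℝ := Real.tanh (t / 2)

/-- Horocyclic parameterization of hyperbolic geodesics in the Poincaré disk. -/
def γH (β a t : ℝ) : ℂ :=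
  Complex.exp (Complex.I * (β : ℂ)) *
    (((2 + Complex.I * (a : ℂ)) * (xhat t : ℂ) + Complex.I * (a : ℂ)) /
      (Complex.I * (a : ℂ) * (xhat t : ℂ) - 2 + Complex.I * (a : ℂ)))

/-- The projective map `Φ(z) = 2z/(1+|z|²)`. -/
def Φm (z : ℂ) : ℂ := 2 * z / (((1 + ‖z‖ ^ 2 : ℝ)) : ℂ)

/-- `μ_h(a) = (1+a²)^{−1/2}`. -/
def μh (a : ℝ) : ℝ := (1 + a ^ 2) ^ (-(1 : ℝ) / 2)

/-- Fan-beam parameterization of Euclidean chords of the unit disk. -/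
def γE (β α u : ℝ) : ℂ :=
  Complex.exp (Complex.I * ((β + α + Real.pi : ℝ) : ℂ)) *
    ((u : ℂ) + Complex.I * ((Real.sin α : ℝ) : ℂ))

/- ---------- auxiliary lemmas ---------- -/

lemma xhat_eq (v : ℝ) : xhat v = (Real.exp v - 1) / (Real.exp v + 1) := by
  have hp : 0 < Real.exp (v/2) := Real.exp_pos _
  have hv : Real.exp v = Real.exp (v/2) * Real.exp (v/2) := by
    rw [← Real.exp_add]; ring_nf
  unfold xhat
  rw [Real.tanh_eq_sinh_div_cosh, Real.sinh_eq, Real.cosh_eq, Real.exp_neg, hv]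
  have h1 : Real.exp (v/2) + (Real.exp (v/2) * Real.exp (v/2))⁻¹ > 0 := by positivity
  field_simp

lemma muh_eq (a : ℝ) : μh a = (Real.sqrt (1 + a^2))⁻¹ := by
  unfold μh
  rw [show (-(1:ℝ)/2) = -(1/2) by norm_num, Real.rpow_neg (by positivity), ← Real.sqrt_eq_rpow]

lemma hX_lemma (a t : ℝ) (s E : ℝ) (hs : s = Real.sqrt (1+a^2)) (hE : E = Real.exp t) :
    (Real.exp (t - Real.log s) - 1) / (Real.exp (t - Real.log s) + 1) = (E - s)/(E + s) := by
  have hspos : 0 < s := by rw [hs]; positivity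
  have hEpos : 0 < E := by rw [hE]; exact Real.exp_pos t
  rw [Real.exp_sub, Real.exp_log hspos, ← hE]
  have h1 : E/s + 1 > 0 := by positivity
  have h2 : E + s > 0 := by positivity
  field_simp

lemma tanh_eq' (t E : ℝ) (hE : E = Real.exp t) :
    Real.tanh t = (E*E - 1)/(E*E + 1) := by
  have h := Real.tanh_eq_sinh_div_cosh t
  rw [Real.sinh_eq, Real.cosh_eq, Real.exp_neg, ← hE] at h
  have hEpos : 0 < E := by rw [hE]; exact Real.exp_pos t
  rw [h]
  have h1 : E + E⁻¹ > 0 := by positivity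
  have h2 : E*E + 1 > 0 := by positivity
  field_simp

lemma core (w : ℂ) (hw : ‖w‖ = 1) (a X b : ℝ) (hb : b = a*(X+1)) :
    Φm (w * (((2 + Complex.I * (a : ℂ)) * (X : ℂ) + Complex.I * (a : ℂ)) /
      (Complex.I * (a : ℂ) * (X : ℂ) - 2 + Complex.I * (a : ℂ)))) =
    w * ((((b^2 - 4*X : ℝ) : ℂ) + ((-2*b*(X+1) : ℝ) : ℂ) * Complex.I) /
      ((2 + 2*X^2 + b^2 : ℝ) : ℂ)) := by
  set N : ℂ := (2 + Complex.I * (a : ℂ)) * (X : ℂ) + Complex.I * (a : ℂ) with hN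
  set D : ℂ := Complex.I * (a : ℂ) * (X : ℂ) - 2 + Complex.I * (a : ℂ) with hD
  have hNc : N = ((2*X : ℝ) : ℂ) + ((b : ℝ) : ℂ) * Complex.I := by rw [hN, hb]; push_cast; ring
  have hDc : D = ((-2 : ℝ) : ℂ) + ((b : ℝ) : ℂ) * Complex.I := by rw [hD, hb]; push_cast; ring
  have hnN : Complex.normSq N = 4*X^2 + b^2 := by rw [hNc, Complex.normSq_add_mul_I]; ring
  have hnD : Complex.normSq D = 4 + b^2 := by rw [hDc, Complex.normSq_add_mul_I]; ring
  have hD0 : D ≠ 0 := by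
    intro h
    rw [h, map_zero] at hnD
    nlinarith [sq_nonneg b]
  have habs : ‖w * (N/D)‖ ^ 2 = (4*X^2 + b^2)/(4 + b^2) := by
    rw [norm_mul, norm_div, hw, one_mul, div_pow, Complex.sq_norm, Complex.sq_norm, hnN, hnD]
  have hconj : (starRingEnd ℂ) D = ((-2 : ℝ) : ℂ) - ((b : ℝ) : ℂ) * Complex.I := by
    rw [hDc, map_add, map_mul, Complex.conj_ofReal, Complex.conj_ofReal, Complex.conj_I]; ring
  have hNconjD : N * (starRingEnd ℂ) D =
      ((b^2 - 4*X : ℝ) : ℂ) + ((-2*b*(X+1) : ℝ) : ℂ) * Complex.I := by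
    rw [hNc, hconj]; push_cast
    linear_combination (-(b:ℂ)^2) * Complex.I_sq
  have hdiv : N / D = (N * (starRingEnd ℂ) D) / (((4 + b^2 : ℝ)) : ℂ) := by
    rw [div_eq_mul_inv, Complex.inv_def, hnD]
    push_cast; ring
  have hb4 : (4 + b^2 : ℝ) ≠ 0 := by positivity
  have hDv : (2 + 2*X^2 + b^2 : ℝ) ≠ 0 := by positivity
  have hb4' : ((4 + b^2 : ℝ) : ℂ) ≠ 0 := by exact_mod_cast hb4
  have hDv' : ((2 + 2*X^2 + b^2 : ℝ) : ℂ) ≠ 0 := by exact_mod_cast hDv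
  rw [Φm, habs, hdiv, hNconjD]
  have h1r : (1 + (4*X^2 + b^2)/(4 + b^2) : ℝ) = 2*(2 + 2*X^2 + b^2)/(4 + b^2) := by
    field_simp; ring
  rw [h1r]
  have habst : ∀ (n u v : ℂ), u ≠ 0 → v ≠ 0 → 2*(w*(n/u))/(2*v/u) = w*(n/v) := by
    intro n u v hu hv; field_simp
  rw [show ((2*(2+2*X^2+b^2)/(4+b^2) : ℝ) : ℂ) = 2 * ((2+2*X^2+b^2 : ℝ):ℂ) / ((4+b^2 : ℝ):ℂ) by
    push_cast; ring]
  exact habst _ _ _ hb4' hDv'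

lemma rhs_form (w : ℂ) (a s τ : ℝ) (hs : s ≠ 0) :
    w * (((1/s : ℝ) : ℂ) + ((a/s : ℝ) : ℂ) * Complex.I) * (-1) *
      (((s⁻¹ : ℝ) : ℂ) * ((τ : ℂ) + Complex.I * (a : ℂ))) =
    w * ((((a^2 - τ : ℝ) : ℂ) + ((-a*(1+τ) : ℝ) : ℂ) * Complex.I) / ((s^2 : ℝ) : ℂ)) := by
  have hs' : (s : ℂ) ≠ 0 := by exact_mod_cast hs
  push_cast
  field_simp
  linear_combination (-w * (a:ℂ)^2) * Complex.I_sq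

lemma final_cmp (w : ℂ) (p q d p2 q2 d2 : ℝ) (hd : d ≠ 0) (hd2 : d2 ≠ 0)
    (h1 : p * d2 = p2 * d) (h2 : q * d2 = q2 * d) :
    w * (((p : ℝ) : ℂ) + ((q : ℝ) : ℂ) * Complex.I) / ((d : ℝ) : ℂ) =
    w * ((((p2 : ℝ) : ℂ) + ((q2 : ℝ) : ℂ) * Complex.I) / ((d2 : ℝ) : ℂ)) := by
  have hd' : (d : ℂ) ≠ 0 := by exact_mod_cast hd
  have hd2' : (d2 : ℂ) ≠ 0 := by exact_mod_cast hd2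
  have h1' : (p : ℂ) * (d2 : ℂ) = (p2 : ℂ) * (d : ℂ) := by exact_mod_cast h1
  have h2' : (q : ℂ) * (d2 : ℂ) = (q2 : ℂ) * (d : ℂ) := by exact_mod_cast h2
  have key : ((p : ℂ) + (q : ℂ) * Complex.I) / ((d : ℝ) : ℂ) =
      ((p2 : ℂ) + (q2 : ℂ) * Complex.I) / ((d2 : ℝ) : ℂ) := by
    rw [div_eq_div_iff hd' hd2']
    linear_combination h1' + Complex.I * h2'
  rw [mul_div_assoc, key]

lemma h1L (a E s : ℝ) (hs2 : s^2 = 1+a^2) (hEs : E+s ≠ 0) (hE1 : E*E+1 ≠ 0) :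
    ((a*((E-s)/(E+s)+1))^2 - 4*((E-s)/(E+s))) * s^2 =
    (a^2 - (E*E-1)/(E*E+1)) * (2 + 2*((E-s)/(E+s))^2 + (a*((E-s)/(E+s)+1))^2) := by
  have ha : a^2 = s^2 - 1 := by linarith
  rw [mul_pow, ha]
  field_simp
  ring

lemma h2L (a E s : ℝ) (hs2 : s^2 = 1+a^2) (hEs : E+s ≠ 0) (hE1 : E*E+1 ≠ 0) :
    (-2*(a*((E-s)/(E+s)+1))*((E-s)/(E+s)+1)) * s^2 =
    (-a*(1+(E*E-1)/(E*E+1))) * (2 + 2*((E-s)/(E+s))^2 + (a*((E-s)/(E+s)+1))^2) := by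
  field_simp
  linear_combination (8*a*E^4*(s+E)^2 - a*(16*s*E^5+8*s^2*E^4+8*E^4+8*E^6)) * hs2

/-- With `t₀ = log μ_h(a) = −log √(1+a²)`:
`Φ(γ_{β,a}(t + t₀)) = γ^E_{β, arctan a}(μ_h(a)·tanh t)
 = e^{i(β+arctan a+π)}·μ_h(a)·(tanh t + i·a)`. -/
theorem projective_equivalence_horocyclic (β a t : ℝ) :
    Φm (γH β a (t + Real.log (μh a))) = γE β (Real.arctan a) (μh a * Real.tanh t) ∧
    Φm (γH β a (t + Real.log (μh a))) =
      Complex.exp (Complex.I * ((β + Real.arctan a + Real.pi : ℝ) : ℂ)) *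
        ((μh a : ℂ) * (((Real.tanh t : ℝ) : ℂ) + Complex.I * (a : ℂ))) := by
  set α := Real.arctan a with hα
  have h1a : (0:ℝ) < 1 + a^2 := by positivity
  set s := Real.sqrt (1+a^2) with hsdef
  have hspos : 0 < s := by rw [hsdef]; positivity
  have hs2 : s^2 = 1 + a^2 := by rw [hsdef]; exact Real.sq_sqrt h1a.le
  have hs0 : s ≠ 0 := ne_of_gt hspos
  set E := Real.exp t with hEdef
  have hEpos : 0 < E := by rw [hEdef]; exact Real.exp_pos t
  have hEs : E + s ≠ 0 := by positivity
  have hE1 : E*E + 1 ≠ 0 := by positivity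
  have hμ : μh a = s⁻¹ := by rw [hsdef]; exact muh_eq a
  have hXv : xhat (t + Real.log (μh a)) = (E-s)/(E+s) := by
    have hlog : t + Real.log (μh a) = t - Real.log s := by rw [hμ, Real.log_inv]; ring
    rw [hlog, xhat_eq]
    exact hX_lemma a t s E hsdef hEdef
  have hτ : Real.tanh t = (E*E-1)/(E*E+1) := tanh_eq' t E hEdef
  set w : ℂ := Complex.exp (Complex.I * (β : ℂ)) with hwdef
  have hw : ‖w‖ = 1 := by
    rw [hwdef, mul_comm]; exact Complex.norm_exp_ofReal_mul_I β
  have hcos : Real.cos α = 1/s := by rw [hα, hsdef]; exact Real.cos_arctan a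
  have hsin : Real.sin α = a/s := by rw [hα, hsdef]; exact Real.sin_arctan a
  have hexp : Complex.exp (Complex.I * ((β + α + Real.pi : ℝ) : ℂ)) =
      w * (((Real.cos α : ℝ) : ℂ) + ((Real.sin α : ℝ) : ℂ) * Complex.I) * (-1) := by
    rw [show ((β + α + Real.pi : ℝ) : ℂ) = (β:ℂ) + (α:ℂ) + (Real.pi:ℂ) by push_cast; ring,
      mul_add, mul_add, Complex.exp_add, Complex.exp_add,
      mul_comm Complex.I (α:ℂ), Complex.exp_mul_I,
      mul_comm Complex.I (Real.pi:ℂ), Complex.exp_pi_mul_I,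
      ← Complex.ofReal_cos, ← Complex.ofReal_sin, hwdef]
  have hDvne : (2 + 2*((E-s)/(E+s))^2 + (a*((E-s)/(E+s)+1))^2 : ℝ) ≠ 0 := by positivity
  have hs2ne : (s^2 : ℝ) ≠ 0 := pow_ne_zero 2 hs0
  have key : Φm (γH β a (t + Real.log (μh a))) =
      Complex.exp (Complex.I * ((β + α + Real.pi : ℝ) : ℂ)) *
        ((μh a : ℂ) * (((Real.tanh t : ℝ) : ℂ) + Complex.I * (a : ℂ))) := by
    rw [γH, hXv, core w hw a ((E-s)/(E+s)) (a*((E-s)/(E+s)+1)) rfl,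
      hexp, hcos, hsin, hμ, hτ, rhs_form w a s ((E*E-1)/(E*E+1)) hs0, ← mul_div_assoc]
    exact final_cmp w _ _ _ _ _ _ hDvne hs2ne
      (h1L a E s hs2 hEs hE1) (h2L a E s hs2 hEs hE1)
  refine ⟨?_, key⟩
  rw [key, γE]
  congr 1
  have hsin2 : Real.sin α = μh a * a := by
    rw [hμ, hsin]; field_simp
  rw [hsin2]
  push_cast
  ring
end
end

section
/- Intertwining of X-ray transforms via the projective equivalence: fix γ > −1. For every continuous function f : ℂ → ℝ on the closed unit disk and all β, a ∈ ℝ, ∫_ℝ x(γ_{β,a}(t))^{2+2γ} · f(Φ(γ_{β,a}(t))) dt = μ_h(a) · ∫_{−μ_h(a)}^{μ_h(a)} (μ_h(a)² − u²)^γ · f( e^{i(β+arctan a+π)}·(u + i·a·μ_h(a)) ) du. In operator form, I₀^H x^{2+2γ} ∘ Φ* = μ_h · Ψ* ∘ I₀^E d^γ, where I₀^H is the hyperbolic X-ray transform, I₀^E d^γ is the Euclidean X-ray transform with weight d(z)^γ = (1−|z|²)^γ in fan-beam coordinates, and Ψ(β,a) = (β, arctan a). -/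
open MeasureTheory

noncomputable section

/-- The distinguished boundary defining function `x(z) = (1−|z|²)/(1+|z|²)`. -/
def xb (z : ℂ) : ℝ := (1 - ‖z‖ ^ 2) / (1 + ‖z‖ ^ 2)

def D0 (a x : ℝ) : ℝ := 2*(1+x^2) + a^2*(1+x)^2
def FF (a x : ℝ) : ℝ := μh a * (a^2*(1+x)^2 + 4*x) / D0 a x
def gg (a t : ℝ) : ℝ := FF a (xhat t)

lemma D0_pos (a x : ℝ) : 0 < D0 a x := by unfold D0; positivity
lemma μh_pos (a : ℝ) : 0 < μh a := Real.rpow_pos_of_pos (by positivity) _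
lemma μh_sq (a : ℝ) : μh a ^ 2 = (1 + a ^ 2)⁻¹ := by
  rw [μh, ← Real.rpow_natCast _ 2, ← Real.rpow_mul (by positivity),
    show (-(1:ℝ)/2*(2:ℕ):ℝ) = -1 by norm_num, Real.rpow_neg_one]
lemma tanh_mem (x : ℝ) : Real.tanh x ∈ Set.Ioo (-1 : ℝ) 1 := by
  have hc := Real.cosh_pos x
  have h1 : Real.sinh x < Real.cosh x := Real.sinh_lt_cosh x
  have h2 : -Real.cosh x < Real.sinh x := by
    have := Real.sinh_lt_cosh (-x); simp [Real.sinh_neg, Real.cosh_neg] at this; linarith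
  rw [Real.tanh_eq_sinh_div_cosh]
  constructor
  · rw [lt_div_iff₀ hc]; linarith
  · rw [div_lt_iff₀ hc]; linarith
lemma hasDerivAt_tanh (x : ℝ) : HasDerivAt Real.tanh (1 - Real.tanh x ^ 2) x := by
  have hc := Real.cosh_pos x
  have h : HasDerivAt (fun y => Real.sinh y / Real.cosh y)
      ((Real.cosh x * Real.cosh x - Real.sinh x * Real.sinh x) / Real.cosh x ^ 2) x :=
    (Real.hasDerivAt_sinh x).div (Real.hasDerivAt_cosh x) hc.ne'
  have he : (fun y => Real.sinh y / Real.cosh y) = Real.tanh := by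
    funext y; rw [Real.tanh_eq_sinh_div_cosh]
  rw [he] at h
  convert h using 1
  rw [Real.tanh_eq_sinh_div_cosh]
  field_simp

lemma sq_sub0 (a t : ℝ) :
    μh a ^ 2 - gg a t ^ 2 = (2*(1 - xhat t ^ 2) / D0 a (xhat t)) ^ 2 := by
  have hD0 := D0_pos a (xhat t)
  have hA : (0:ℝ) < 1 + a^2 := by positivity
  rw [gg, FF, div_pow, mul_pow, μh_sq]
  simp only [D0]
  have h1 : (1:ℝ) + a^2 ≠ 0 := by positivity
  have h2 : (2*(1+xhat t^2) + a^2*(1+xhat t)^2 : ℝ) ≠ 0 := by positivity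
  field_simp
  ring

lemma xhat_mem (t : ℝ) : xhat t ∈ Set.Ioo (-1:ℝ) 1 := tanh_mem (t/2)

lemma sq_sub_pos (a t : ℝ) : 0 < μh a ^ 2 - gg a t ^ 2 := by
  rw [sq_sub0]
  have h := xhat_mem t
  have : (0:ℝ) < 2*(1 - xhat t ^ 2) / D0 a (xhat t) := by
    apply div_pos _ (D0_pos a (xhat t))
    nlinarith [h.1, h.2]
  positivity

lemma gg_mem (a t : ℝ) : gg a t ∈ Set.Ioo (-(μh a)) (μh a) := by
  have h := sq_sub_pos a t
  have hμ := μh_pos a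
  constructor <;> nlinarith

lemma hasDerivAt_gg (a t : ℝ) :
    HasDerivAt (gg a) ((μh a ^ 2 - gg a t ^ 2) / μh a) t := by
  have hx : HasDerivAt xhat ((1 - xhat t ^ 2) / 2) t := by
    have h1 : HasDerivAt (fun s : ℝ => s / 2) (1/2) t := (hasDerivAt_id t).div_const 2
    have h2 := (hasDerivAt_tanh (t/2)).comp t h1
    have h3 : (1 - Real.tanh (t/2) ^ 2) * (1/2) = (1 - xhat t ^ 2) / 2 := by rw [xhat]; ring
    rw [h3] at h2
    exact h2
  set x := xhat t with hxd
  have hP : HasDerivAt (fun x : ℝ => μh a * (a^2*(1+x)^2 + 4*x))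
      (μh a * (a^2*(2*(1+x)) + 4)) x := by
    apply HasDerivAt.const_mul
    have h1 : HasDerivAt (fun x : ℝ => (1+x)) 1 x := (hasDerivAt_id x).const_add 1
    have h2 := h1.pow 2
    have h3 : HasDerivAt (fun x : ℝ => a^2*(1+x)^2) (a^2*(2*(1+x))) x := by
      convert h2.const_mul (a^2) using 1 <;> first | rfl | ring_nf
    have h4 : HasDerivAt (fun x : ℝ => 4*x) 4 x := by
      simpa using (hasDerivAt_id x).const_mul 4
    exact h3.add h4
  have hQ : HasDerivAt (fun x : ℝ => D0 a x) (2*(2*x) + a^2*(2*(1+x))) x := by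
    have h1 : HasDerivAt (fun x : ℝ => (1+x)) 1 x := (hasDerivAt_id x).const_add 1
    have h3 : HasDerivAt (fun x : ℝ => a^2*(1+x)^2) (a^2*(2*(1+x))) x := by
      convert (h1.pow 2).const_mul (a^2) using 1 <;> first | rfl | ring_nf
    have h5 : HasDerivAt (fun x : ℝ => 2*(1+x^2)) (2*(2*x)) x := by
      have := ((hasDerivAt_pow 2 x).const_add 1).const_mul (2:ℝ)
      convert this using 1 <;> first | rfl | ring_nf
    have := h5.add h3
    convert this using 1 <;> first | rfl | (ext y; simp [D0]) | ring_nf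
  have hF : HasDerivAt (FF a)
      ((μh a * (a^2*(2*(1+x)) + 4) * D0 a x
        - μh a * (a^2*(1+x)^2 + 4*x) * (2*(2*x) + a^2*(2*(1+x)))) / (D0 a x)^2) x := by
    exact hP.div hQ (D0_pos a x).ne'
  have hcomp := hF.comp t hx
  have : gg a = FF a ∘ xhat := rfl
  rw [this]
  convert hcomp using 1
  · rfl
  · rfl
  rw [show FF a ∘ xhat = gg a from rfl]
  rw [show (μh a ^ 2 - gg a t ^ 2) = (2*(1 - xhat t ^ 2) / D0 a (xhat t)) ^ 2 from sq_sub0 a t]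
  have hrel : μh a ^ 2 * (1 + a^2) = 1 := by
    rw [μh_sq]; field_simp
  have hμ0 := (μh_pos a).ne'
  have hD00 := (D0_pos a (xhat t)).ne'
  rw [← hxd]
  simp only [D0] at *
  field_simp
  linear_combination (-(8:ℝ)*(1-xhat t^2)^2*(2*(1+xhat t^2)+a^2*(1+xhat t)^2)^2 - (-24 - 64*x*a^2 - 32*x*a^4 - 16*x^2 - 32*x^2*a^4 + 64*x^3*a^2 + 32*x^3*a^4 + 72*x^4 + 64*x^4*a^2 + 80*x^4*a^4 + 64*x^5*a^2 + 32*x^5*a^4 - 32*x^6*a^4 - 64*x^7*a^2 - 32*x^7*a^4 - 32*x^8 - 32*x^8*a^2 - 8*x^8*a^4 - 32*a^2 - 8*a^4)) * hrel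

lemma tanh_tendsto_atTop : Filter.Tendsto Real.tanh Filter.atTop (nhds 1) := by
  have he : Real.tanh = fun x => 1 - 2 / (Real.exp (2 * x) + 1) := by
    funext x
    rw [Real.tanh_eq_sinh_div_cosh, Real.sinh_eq, Real.cosh_eq]
    have h1 : Real.exp x > 0 := Real.exp_pos x
    have h3 : Real.exp (2*x) = Real.exp x * Real.exp x := by
      rw [← Real.exp_add]; ring_nf
    rw [h3, Real.exp_neg x]
    field_simp
    ring
  rw [he]
  have : Filter.Tendsto (fun x:ℝ => 2 / (Real.exp (2 * x) + 1)) Filter.atTop (nhds 0) := by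
    apply Filter.Tendsto.div_atTop tendsto_const_nhds
    apply Filter.tendsto_atTop_add_const_right
    exact (Real.tendsto_exp_atTop).comp (Filter.tendsto_id.const_mul_atTop two_pos)
  simpa using tendsto_const_nhds.sub this

lemma tanh_tendsto_atBot : Filter.Tendsto Real.tanh Filter.atBot (nhds (-1)) := by
  have : Filter.Tendsto (fun x => -Real.tanh (-x)) Filter.atBot (nhds (-1)) :=
    (tanh_tendsto_atTop.comp Filter.tendsto_neg_atBot_atTop).neg
  simpa [Real.tanh_neg] using this

lemma gg_cont (a : ℝ) : Continuous (gg a) :=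
  continuous_iff_continuousAt.2 fun t => (hasDerivAt_gg a t).continuousAt

lemma FF_contAt (a x : ℝ) : ContinuousAt (FF a) x := by
  apply ContinuousAt.div
  · fun_prop
  · unfold D0; fun_prop
  · exact (D0_pos a x).ne'

lemma gg_tendsto_atTop (a : ℝ) : Filter.Tendsto (gg a) Filter.atTop (nhds (μh a)) := by
  have hx : Filter.Tendsto xhat Filter.atTop (nhds 1) := by
    apply tanh_tendsto_atTop.comp
    exact Filter.Tendsto.atTop_div_const two_pos Filter.tendsto_id
  have hFF : FF a 1 = μh a := by
    rw [FF, D0]; rw [div_eq_iff (by positivity : (2*(1+(1:ℝ)^2) + a^2*(1+1)^2) ≠ 0)]; ring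
  have := (FF_contAt a 1).tendsto.comp hx
  rw [hFF] at this
  exact this

lemma gg_tendsto_atBot (a : ℝ) : Filter.Tendsto (gg a) Filter.atBot (nhds (-(μh a))) := by
  have hx : Filter.Tendsto xhat Filter.atBot (nhds (-1)) := by
    apply tanh_tendsto_atBot.comp
    exact Filter.Tendsto.atBot_div_const two_pos Filter.tendsto_id
  have hFF : FF a (-1) = -(μh a) := by
    rw [FF, D0]; rw [div_eq_iff (by positivity : (2*(1+(-1:ℝ)^2) + a^2*(1+(-1))^2) ≠ 0)]; ring
  have := (FF_contAt a (-1)).tendsto.comp hx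
  rw [hFF] at this
  exact this

lemma gg_strictMono (a : ℝ) : StrictMono (gg a) := by
  apply strictMono_of_deriv_pos
  intro t
  rw [(hasDerivAt_gg a t).deriv]
  exact div_pos (sq_sub_pos a t) (μh_pos a)

lemma gg_range (a : ℝ) : Set.range (gg a) = Set.Ioo (-(μh a)) (μh a) := by
  apply Set.eq_of_subset_of_subset
  · rintro y ⟨t, rfl⟩; exact gg_mem a t
  · rintro y ⟨h1, h2⟩
    obtain ⟨t1, ht1⟩ := ((gg_tendsto_atBot a).eventually (eventually_lt_nhds h1)).exists
    obtain ⟨t2, ht2⟩ := ((gg_tendsto_atTop a).eventually (eventually_gt_nhds h2)).exists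
    exact intermediate_value_univ t1 t2 (gg_cont a) ⟨le_of_lt ht1, le_of_lt ht2⟩

lemma denom_ne (a x : ℝ) : Complex.I * (a : ℂ) * (x : ℂ) - 2 + Complex.I * (a : ℂ) ≠ 0 := by
  intro h
  have := congrArg Complex.re h
  simp [Complex.mul_re, Complex.add_re, Complex.sub_re] at this

lemma normSq_num (a x : ℝ) :
    Complex.normSq ((2 + Complex.I * (a : ℂ)) * (x : ℂ) + Complex.I * (a : ℂ))
      = 4*x^2 + a^2*(1+x)^2 := by
  simp [Complex.normSq_apply, Complex.mul_re, Complex.mul_im, Complex.add_re, Complex.add_im]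
  ring

lemma normSq_den (a x : ℝ) :
    Complex.normSq (Complex.I * (a : ℂ) * (x : ℂ) - 2 + Complex.I * (a : ℂ))
      = 4 + a^2*(1+x)^2 := by
  simp [Complex.normSq_apply, Complex.mul_re, Complex.mul_im, Complex.add_re, Complex.add_im,
    Complex.sub_re, Complex.sub_im]
  ring

lemma abs_sq_γH (β a t : ℝ) :
    ‖γH β a t‖ ^ 2
      = (4*(xhat t)^2 + a^2*(1+xhat t)^2) / (4 + a^2*(1+xhat t)^2) := by
  rw [γH, norm_mul, norm_div, Complex.norm_exp]
  simp only [Complex.mul_re, Complex.I_re, Complex.I_im, Complex.ofReal_re, Complex.ofReal_im]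
  rw [show (0:ℝ) * β - 1 * 0 = 0 by ring, Real.exp_zero, one_mul, div_pow,
    Complex.sq_norm, Complex.sq_norm, normSq_num, normSq_den]

lemma xb_γH (β a t : ℝ) : xb (γH β a t) = 2*(1-(xhat t)^2) / D0 a (xhat t) := by
  have hden : (0:ℝ) < 4 + a^2*(1+xhat t)^2 := by positivity
  have hD0 := D0_pos a (xhat t)
  rw [xb, abs_sq_γH]
  rw [div_eq_div_iff (by positivity) hD0.ne']
  field_simp
  unfold D0
  ring

lemma exp_angle (β a : ℝ) :
    Complex.exp (Complex.I * ((β + Real.arctan a + Real.pi : ℝ) : ℂ))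
      = -Complex.exp (Complex.I * (β:ℂ)) * ((μh a : ℝ) : ℂ) * (1 + Complex.I * (a:ℂ)) := by
  have hμ : (μh a : ℝ) = 1 / Real.sqrt (1 + a^2) := by
    rw [μh, show (-(1:ℝ)/2) = -(1/2) by norm_num, Real.rpow_neg (by positivity),
      ← Real.sqrt_eq_rpow, one_div]
  rw [Complex.ofReal_add, Complex.ofReal_add, mul_add, mul_add, Complex.exp_add,
    Complex.exp_add]
  rw [show Complex.I * (Real.pi:ℂ) = (Real.pi:ℂ) * Complex.I by ring, Complex.exp_pi_mul_I]
  rw [show Complex.I * ((Real.arctan a:ℝ):ℂ) = ((Real.arctan a:ℝ):ℂ) * Complex.I by ring,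
    Complex.exp_mul_I]
  rw [← Complex.ofReal_cos, ← Complex.ofReal_sin, Real.cos_arctan, Real.sin_arctan]
  have hs : Real.sqrt (1 + a^2) ≠ 0 := by positivity
  rw [hμ]
  push_cast
  have : ((Real.sqrt (1+a^2):ℝ):ℂ) ≠ 0 := by exact_mod_cast hs
  field_simp

lemma phi_γH (β a t : ℝ) :
    Φm (γH β a t) = Complex.exp (Complex.I * ((β + Real.arctan a + Real.pi : ℝ) : ℂ)) *
      ((gg a t : ℝ) + Complex.I * (a : ℂ) * ((μh a : ℝ) : ℂ)) := by
  have hx : xhat t = xhat t := rfl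
  have hc2 : ((μh a : ℝ):ℂ) ^ 2 = (1 + (a:ℂ)^2)⁻¹ := by
    rw [← Complex.ofReal_pow, μh_sq]; push_cast; ring_nf
  have hA : (1:ℂ) + (a:ℂ)^2 ≠ 0 := by
    have : ((1 + a^2 : ℝ):ℂ) ≠ 0 := by
      exact_mod_cast (show (1+a^2:ℝ) ≠ 0 by positivity)
    push_cast at this; exact this
  have hD := denom_ne a (xhat t)
  have hD0 : ((D0 a (xhat t) : ℝ):ℂ) ≠ 0 := by
    exact_mod_cast (D0_pos a (xhat t)).ne'
  have hnD : ((4 + a^2*(1+xhat t)^2 : ℝ):ℂ) ≠ 0 := by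
    exact_mod_cast (show (4 + a^2*(1+xhat t)^2:ℝ) ≠ 0 by positivity)
  have hS : ((4 + 4*(xhat t)^2 + 2*a^2*(1+xhat t)^2 : ℝ):ℂ) ≠ 0 := by
    exact_mod_cast (show (4 + 4*(xhat t)^2 + 2*a^2*(1+xhat t)^2:ℝ) ≠ 0 by positivity)
  have hgg : ((gg a t : ℝ):ℂ)
      = ((μh a : ℝ):ℂ) * ((a^2*(1+xhat t)^2 + 4*xhat t : ℝ):ℂ) / ((D0 a (xhat t) : ℝ):ℂ) := by
    rw [gg, FF]; push_cast; ring
  rw [exp_angle, Φm, abs_sq_γH, γH, hgg,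
    show (1 + (4*(xhat t)^2 + a^2*(1+xhat t)^2)/(4 + a^2*(1+xhat t)^2) : ℝ)
      = (4 + 4*(xhat t)^2 + 2*a^2*(1+xhat t)^2)/(4 + a^2*(1+xhat t)^2) from by
        field_simp
        ring,
    Complex.ofReal_div]
  have key : -Complex.exp (Complex.I * (β:ℂ)) * ((μh a : ℝ):ℂ) * (1 + Complex.I*(a:ℂ)) *
      (((μh a : ℝ):ℂ) * ((a^2*(1+xhat t)^2 + 4*xhat t : ℝ):ℂ) / ((D0 a (xhat t) : ℝ):ℂ)
        + Complex.I*(a:ℂ)*((μh a : ℝ):ℂ))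
      = -Complex.exp (Complex.I * (β:ℂ)) * (1 + Complex.I*(a:ℂ)) *
        (((a^2*(1+xhat t)^2 + 4*xhat t : ℝ):ℂ) / ((D0 a (xhat t) : ℝ):ℂ) + Complex.I*(a:ℂ)) *
          (1 + (a:ℂ)^2)⁻¹ := by
    rw [← hc2]; ring
  rw [key]
  rw [show (2 * (Complex.exp (Complex.I * (β:ℂ)) *
        (((2 + Complex.I * (a:ℂ)) * ((xhat t:ℝ):ℂ) + Complex.I * (a:ℂ)) /
          (Complex.I * (a:ℂ) * ((xhat t:ℝ):ℂ) - 2 + Complex.I * (a:ℂ)))) /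
        (((4 + 4*(xhat t)^2 + 2*a^2*(1+xhat t)^2 : ℝ):ℂ) / ((4 + a^2*(1+xhat t)^2 : ℝ):ℂ)))
      = (2 * Complex.exp (Complex.I * (β:ℂ)) *
          ((2 + Complex.I * (a:ℂ)) * ((xhat t:ℝ):ℂ) + Complex.I * (a:ℂ)) *
            ((4 + a^2*(1+xhat t)^2 : ℝ):ℂ)) /
        ((Complex.I * (a:ℂ) * ((xhat t:ℝ):ℂ) - 2 + Complex.I * (a:ℂ)) *
          ((4 + 4*(xhat t)^2 + 2*a^2*(1+xhat t)^2 : ℝ):ℂ)) from by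
      field_simp]
  rw [show (-Complex.exp (Complex.I * (β:ℂ)) * (1 + Complex.I*(a:ℂ)) *
        (((a^2*(1+xhat t)^2 + 4*xhat t : ℝ):ℂ) / ((D0 a (xhat t) : ℝ):ℂ) + Complex.I*(a:ℂ)) *
          (1 + (a:ℂ)^2)⁻¹)
      = (-Complex.exp (Complex.I * (β:ℂ)) * (1 + Complex.I*(a:ℂ)) *
          (((a^2*(1+xhat t)^2 + 4*xhat t : ℝ):ℂ) + Complex.I*(a:ℂ) * ((D0 a (xhat t) : ℝ):ℂ))) /
        (((D0 a (xhat t) : ℝ):ℂ) * (1 + (a:ℂ)^2)) from by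
      field_simp]
  rw [div_eq_div_iff (mul_ne_zero hD hS) (mul_ne_zero hD0 hA)]
  simp only [D0]
  push_cast
  have h3 : Complex.I ^ 3 = -Complex.I := by
    rw [pow_succ, Complex.I_sq]; ring
  ring_nf
  simp only [Complex.I_sq, h3]
  ring

/-- Intertwining of X-ray transforms via the projective equivalence
(`I₀^H x^{2+2γ} ∘ Φ* = μ_h · Ψ* ∘ I₀^E d^γ`): for `γ > −1`, continuous `f` and all `β, a`,
`∫_ℝ x(γ_{β,a}(t))^{2+2γ} f(Φ(γ_{β,a}(t))) dt
 = μ_h(a) ∫_{−μ_h(a)}^{μ_h(a)} (μ_h(a)² − u²)^γ f(e^{i(β+arctan a+π)}(u + i·a·μ_h(a))) du`. -/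
theorem xray_intertwining (γ : ℝ) (hγ : -1 < γ) (f : ℂ → ℝ) (hf : Continuous f) (β a : ℝ) :
    (∫ t : ℝ, xb (γH β a t) ^ (2 + 2 * γ) * f (Φm (γH β a t))) =
      μh a * ∫ u in (-(μh a))..(μh a),
        ((μh a) ^ 2 - u ^ 2) ^ γ *
          f (Complex.exp (Complex.I * ((β + Real.arctan a + Real.pi : ℝ) : ℂ)) *
            ((u : ℂ) + Complex.I * (a : ℂ) * ((μh a : ℝ) : ℂ))) := by
  have hm0 : 0 < μh a := μh_pos a
  set G : ℝ → ℝ := fun u => ((μh a) ^ 2 - u ^ 2) ^ γ *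
      f (Complex.exp (Complex.I * ((β + Real.arctan a + Real.pi : ℝ) : ℂ)) *
        ((u : ℂ) + Complex.I * (a : ℂ) * ((μh a : ℝ) : ℂ))) with hG
  have hchg := integral_image_eq_integral_abs_deriv_smul MeasurableSet.univ
      (fun x _ => (hasDerivAt_gg a x).hasDerivWithinAt)
      ((gg_strictMono a).injective.injOn) G
  rw [Set.image_univ, gg_range, Measure.restrict_univ] at hchg
  have hpt : ∀ t, xb (γH β a t) ^ (2 + 2 * γ) * f (Φm (γH β a t))
      = μh a * (|(μh a ^ 2 - gg a t ^ 2) / μh a| • G (gg a t)) := by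
    intro t
    rw [phi_γH β a t, xb_γH β a t]
    have hsq := sq_sub0 a t
    set y := 2*(1 - xhat t ^ 2) / D0 a (xhat t) with hy
    have hy0 : 0 < y := by
      apply div_pos _ (D0_pos a (xhat t))
      nlinarith [(xhat_mem t).1, (xhat_mem t).2]
    simp only [hG, smul_eq_mul]
    rw [hsq, abs_of_pos (div_pos (by positivity) hm0)]
    rw [show (2 + 2*γ : ℝ) = (2:ℝ)*(1+γ) by ring, Real.rpow_mul hy0.le,
      show ((2:ℝ):ℝ) = ((2:ℕ):ℝ) by norm_num, Real.rpow_natCast,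
      Real.rpow_add (by positivity : (0:ℝ) < y^2), Real.rpow_one]
    field_simp
  rw [MeasureTheory.integral_congr_ae (Filter.Eventually.of_forall hpt),
    MeasureTheory.integral_const_mul, ← hchg,
    intervalIntegral.integral_of_le (by linarith : -(μh a) ≤ μh a),
    MeasureTheory.integral_Ioc_eq_integral_Ioo]
end
end
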